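/- (Lemma 3, second part) In the spatial model with distinct node locations, the maximum visibility of node i tends to 1 as the decay parameter tends to infinity: the function γ ↦ p_i^{max}(γ) = ⨆_{x∈A} r_i(γ, x) tends to 1 as γ → ∞ (along the atTop filter on ℝ). -/

import Mathlib

open Finset Real Filter

/-- Lemma 3, second part: in the spatial model with distinct node locations, the maximum
visibility `p_i^{max}(γ) = ⨆ x, r_i(γ, x)` of node `i` tends to `1` as the decay
parameter tends to infinity. -/
theorem spatial_max_visibility_tendsto_one
    {A : Type*} [MetricSpace A] [Nonempty A] {V : Type*} [Fintype V]
    (hV : 2 ≤ Fintype.card V)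
    (χ : V → A) (hχ : Function.Injective χ)
    (β : V → ℝ) (hβ : ∀ j, 0 < β j) (i : V) :
    Tendsto (fun γ : ℝ =>
        ⨆ x : A, Real.exp (-γ * dist (χ i) x) * β i
          / ∑ j, Real.exp (-γ * dist (χ j) x) * β j)
      atTop (nhds 1) := by
  classical
  have hVne : Nonempty V := Fintype.card_pos_iff.mp (by omega)
  set f : ℝ → A → ℝ := fun γ x => Real.exp (-γ * dist (χ i) x) * β i
      / ∑ j, Real.exp (-γ * dist (χ j) x) * β j with hf
  have hden : ∀ γ x, 0 < ∑ j, Real.exp (-γ * dist (χ j) x) * β j := fun γ x =>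
    Finset.sum_pos (fun j _ => mul_pos (Real.exp_pos _) (hβ j)) Finset.univ_nonempty
  have hle1 : ∀ γ x, f γ x ≤ 1 := by
    intro γ x
    rw [hf, div_le_one (hden γ x)]
    exact Finset.single_le_sum (f := fun j => Real.exp (-γ * dist (χ j) x) * β j)
      (fun j _ => le_of_lt (mul_pos (Real.exp_pos _) (hβ j))) (Finset.mem_univ i)
  have hbdd : ∀ γ, BddAbove (Set.range (f γ)) := fun γ =>
    ⟨1, by rintro _ ⟨x, rfl⟩; exact hle1 γ x⟩
  have hsum : Tendsto (fun γ => ∑ j, Real.exp (-γ * dist (χ j) (χ i)) * β j)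
      atTop (nhds (β i)) := by
    have h : Tendsto (fun γ => ∑ j, Real.exp (-γ * dist (χ j) (χ i)) * β j) atTop
        (nhds (∑ j, if j = i then β i else 0)) := by
      apply tendsto_finset_sum
      intro j _
      by_cases hj : j = i
      · simp [hj, dist_self]
      · simp only [if_neg hj]
        have hd : 0 < dist (χ j) (χ i) := dist_pos.mpr (fun h => hj (hχ h))
        have he : Tendsto (fun γ : ℝ => Real.exp (-γ * dist (χ j) (χ i))) atTop (nhds 0) := by
          apply Real.tendsto_exp_atBot.comp
          exact Tendsto.atBot_mul_const hd tendsto_neg_atTop_atBot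
        simpa using he.mul_const (β j)
    simpa using h
  have hlow : Tendsto (fun γ => f γ (χ i)) atTop (nhds 1) := by
    have := Tendsto.div (tendsto_const_nhds (x := β i) (f := atTop)) hsum (hβ i).ne'
    rw [div_self (hβ i).ne'] at this
    simpa [hf, dist_self, Pi.div_def] using this
  exact tendsto_of_tendsto_of_tendsto_of_le_of_le hlow tendsto_const_nhds
    (fun γ => le_ciSup (hbdd γ) (χ i)) (fun γ => ciSup_le (hle1 γ))
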